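/- For every complete k-edge-colored graph G with k ≥ 3 that does not contain a rainbow triangle, there exists a color i ∈ {1,…,k} such that the i-th monochromatic subgraph G_{|i} (the graph on the full vertex set V whose edges are the pairs of color i) is disconnected. -/

import Mathlib

/-- The edge relation `E` on `V` together with the labeling `ℓ : V ≃ Fin n`
is the simple permutation graph of the permutation `π` of `{1,…,n}`:
`{u,v} ∈ E ⇔ ℓ(u) > ℓ(v) and π⁻¹(ℓ(u)) < π⁻¹(ℓ(v))` (stated symmetrically in `u,v`). -/
def IsPermGraph {V : Type*} {n : ℕ} (E : V → V → Prop) (ℓ : V ≃ Fin n)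
    (π : Equiv.Perm (Fin n)) : Prop :=
  ∀ u v : V, E u v ↔
    ((ℓ v < ℓ u ∧ π⁻¹ (ℓ u) < π⁻¹ (ℓ v)) ∨ (ℓ u < ℓ v ∧ π⁻¹ (ℓ v) < π⁻¹ (ℓ u)))

/-- `c` is the edge-coloring of a complete `k`-edge-colored graph on `V`:
it is symmetric, every pair of distinct vertices receives a color in `{1,…,k}`,
and every color in `{1,…,k}` occurs on some edge. -/
def IsCompleteColoring {V : Type*} (k : ℕ) (c : V → V → ℕ) : Prop :=
  (∀ u v : V, c u v = c v u) ∧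
  (∀ u v : V, u ≠ v → c u v ∈ Finset.Icc 1 k) ∧
  (∀ i ∈ Finset.Icc 1 k, ∃ u v : V, u ≠ v ∧ c u v = i)

/-- The edge relation of the `i`-th monochromatic subgraph `G_{|i}`. -/
def monoEdge {V : Type*} (c : V → V → ℕ) (i : ℕ) : V → V → Prop :=
  fun u v => u ≠ v ∧ c u v = i

/-- The complete edge-colored graph with coloring `c` is a complete edge-colored
permutation graph: there are a labeling `ℓ` and permutations `π i` such that every
monochromatic subgraph `(G_{|i}, ℓ)` is the simple permutation graph of `π i`. -/
def IsCECPG {V : Type*} [Fintype V] (c : V → V → ℕ) : Prop :=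
  ∃ (ℓ : V ≃ Fin (Fintype.card V)) (π : ℕ → Equiv.Perm (Fin (Fintype.card V))),
    ∀ i : ℕ, IsPermGraph (monoEdge c i) ℓ (π i)

/-- `c` contains a rainbow triangle: three vertices whose three connecting edges
have pairwise distinct colors. -/
def HasRainbowTriangle {V : Type*} (c : V → V → ℕ) : Prop :=
  ∃ u v w : V, u ≠ v ∧ u ≠ w ∧ v ≠ w ∧
    c u v ≠ c u w ∧ c u v ≠ c v w ∧ c u w ≠ c v w

/-- The `i`-th monochromatic subgraph `G_{|i}` as a simple graph on `V`. -/
def monoGraph {V : Type*} (c : V → V → ℕ) (hs : ∀ u v : V, c u v = c v u) (i : ℕ) :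
    SimpleGraph V where
  Adj u v := u ≠ v ∧ c u v = i
  symm := by
    constructor
    intro u v h
    exact ⟨h.1.symm, (hs v u).trans h.2⟩
  loopless := by
    constructor
    intro u h
    exact h.1 rfl

open Relation

/-- The `j`-colored edge relation restricted to vertices different from `v`. -/
private abbrev avoidRel {V : Type*} (c : V → V → ℕ) (j : ℕ) (v : V) : V → V → Prop :=
  fun p q => p ≠ v ∧ q ≠ v ∧ monoEdge c j p q

private lemma first_edge {V : Type*} {r : V → V → Prop} {u w : V}
    (h : ReflTransGen r u w) (hne : u ≠ w) : ∃ s, r u s := by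
  rcases h.cases_head with rfl | ⟨s, hs, _⟩
  · exact absurd rfl hne
  · exact ⟨s, hs⟩

private lemma no_rainbow {V : Type*} {c : V → V → ℕ} (hnr : ¬ HasRainbowTriangle c)
    {u v w : V} (h1 : u ≠ v) (h2 : u ≠ w) (h3 : v ≠ w) :
    c u v = c u w ∨ c u v = c v w ∨ c u w = c v w := by
  by_contra hcon
  push_neg at hcon
  exact hnr ⟨u, v, w, h1, h2, h3, hcon.1, hcon.2.1, hcon.2.2⟩

/-- Core contradiction: colors `a`, `b`, `j` pairwise distinct, all three
monochromatic graphs connected, but `j` becomes disconnected after removing `v`. -/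
private lemma core {V : Type*} {a b j : ℕ} (hab : a ≠ b) (haj : a ≠ j) (hbj : b ≠ j)
    {c : V → V → ℕ} (hs : ∀ u v : V, c u v = c v u)
    (hnr : ¬ HasRainbowTriangle c)
    (hca : ∀ x y : V, ReflTransGen (monoEdge c a) x y)
    (hcb : ∀ x y : V, ReflTransGen (monoEdge c b) x y)
    (hcj : ∀ x y : V, ReflTransGen (monoEdge c j) x y)
    (v x y : V) (hx : x ≠ v) (hy : y ≠ v)
    (hxy : ¬ ReflTransGen (avoidRel c j v) x y) : False := by
  set R := avoidRel c j v with hR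
  have symR : Symmetric R := by
    intro p q hpq
    exact ⟨hpq.2.1, hpq.1, hpq.2.2.1.symm, (hs q p).trans hpq.2.2.2⟩
  have rsym : ∀ {p q : V}, ReflTransGen R p q → ReflTransGen R q p :=
    fun h => (@ReflTransGen.stdSymm _ R ⟨symR⟩).symm _ _ h
  have endNe : ∀ {z w : V}, ReflTransGen R z w → z ≠ v → w ≠ v := by
    intro z w h hz
    induction h with
    | refl => exact hz
    | tail _ h2 _ => exact h2.2.1
  -- Claim A: along a `j`-reachability class, an outside vertex sees one color.
  have claimA : ∀ {z w u : V}, ReflTransGen R z w → ¬ ReflTransGen R u z → u ≠ v →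
      c u z = c u w := by
    intro z w u h
    induction h with
    | refl => intro _ _; rfl
    | @tail w₁ w₂ h1 h2 ih =>
      intro hu huv
      have huw₁ : ¬ ReflTransGen R u w₁ := fun h' => hu (h'.trans (rsym h1))
      have huw₂ : ¬ ReflTransGen R u w₂ :=
        fun h' => huw₁ (h'.trans (ReflTransGen.single (symR h2)))
      have hw₁v : w₁ ≠ v := h2.1
      have hw₂v : w₂ ≠ v := h2.2.1
      have hne12 : w₁ ≠ w₂ := h2.2.2.1
      have hcol : c w₁ w₂ = j := h2.2.2.2
      have huw₁ne : u ≠ w₁ := fun e => huw₁ (e ▸ ReflTransGen.refl)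
      have huw₂ne : u ≠ w₂ := fun e => huw₂ (e ▸ ReflTransGen.refl)
      have h1j : c u w₁ ≠ j := fun e => huw₁ (ReflTransGen.single ⟨huv, hw₁v, huw₁ne, e⟩)
      have h2j : c u w₂ ≠ j := fun e => huw₂ (ReflTransGen.single ⟨huv, hw₂v, huw₂ne, e⟩)
      rcases no_rainbow hnr huw₁ne huw₂ne hne12 with h | h | h
      · rw [ih hu huv, h]
      · exact absurd (h.trans hcol) h1j
      · exact absurd (h.trans hcol) h2j
  -- Claim B: `v` has a `j`-edge into each restricted component that is not everything.
  have claimB : ∀ z w : V, z ≠ v → ¬ ReflTransGen R z w →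
      ∃ t, ReflTransGen R z t ∧ c v t = j := by
    intro z w hz hnzw
    have key : ∀ w', ReflTransGen (monoEdge c j) z w' → ¬ ReflTransGen R z w' →
        ∃ t, ReflTransGen R z t ∧ c v t = j := by
      intro w' h
      induction h with
      | refl => intro hn; exact absurd ReflTransGen.refl hn
      | @tail w₁ w₂ h1 h2 ih =>
        intro hn
        by_cases hr : ReflTransGen R z w₁
        · by_cases hw₂ : w₂ = v
          · exact ⟨w₁, hr, (hs v w₁).trans (hw₂ ▸ h2.2)⟩
          · exact absurd (hr.tail ⟨endNe hr hz, hw₂, h2⟩) hn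
        · exact ih hr
    exact key w (hcj z w) hnzw
  -- Claim D: triangle through `v` forces the color of a cross edge.
  have claimD : ∀ (e : ℕ) (z₀ t : V), c v z₀ = e → e ≠ j → c v t = j → z₀ ≠ v → t ≠ v →
      ¬ ReflTransGen R z₀ t → c z₀ t = e := by
    intro e z₀ t hvz hej hvt hz₀ ht hnr'
    have hz₀t : z₀ ≠ t := fun h => hnr' (h ▸ ReflTransGen.refl)
    have hctj : c z₀ t ≠ j := fun h => hnr' (ReflTransGen.single ⟨hz₀, ht, hz₀t, h⟩)
    rcases no_rainbow hnr (Ne.symm hz₀) (Ne.symm ht) hz₀t with h | h | h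
    · exact absurd (hvz.symm.trans (h.trans hvt)) hej
    · exact h.symm.trans hvz
    · exact absurd (h.symm.trans hvt) hctj
  -- `v` has an `a`-edge and a `b`-edge.
  obtain ⟨z, hvz_ne, hvza⟩ : ∃ s, v ≠ s ∧ c v s = a := first_edge (hca v x) (Ne.symm hx)
  obtain ⟨z', hvz'_ne, hvz'b⟩ : ∃ s, v ≠ s ∧ c v s = b := first_edge (hcb v x) (Ne.symm hx)
  have hzv : z ≠ v := Ne.symm hvz_ne
  have hz'v : z' ≠ v := Ne.symm hvz'_ne
  have far : ∀ p : V, ∃ w, w ≠ v ∧ ¬ ReflTransGen R p w := by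
    intro p
    by_cases h : ReflTransGen R p x
    · exact ⟨y, hy, fun h' => hxy ((rsym h).trans h')⟩
    · exact ⟨x, hx, h⟩
  by_cases hzz' : ReflTransGen R z z'
  · obtain ⟨w, hwv, hzw⟩ := far z
    have hwz : ¬ ReflTransGen R w z := fun h => hzw (rsym h)
    obtain ⟨t, hwt, hvt⟩ := claimB w z hwv hwz
    have hzt : ¬ ReflTransGen R z t := fun h => hzw (h.trans (rsym hwt))
    have hz't : ¬ ReflTransGen R z' t := fun h => hzt (hzz'.trans h)
    have htv : t ≠ v := endNe hwt hwv
    have h1 : c z t = a := claimD a z t hvza haj hvt hzv htv hzt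
    have h2 : c z' t = b := claimD b z' t hvz'b hbj hvt hz'v htv hz't
    have h3 : c t z = c t z' := claimA hzz' (fun h => hzt (rsym h)) htv
    exact hab (h1.symm.trans (((hs z t).trans h3).trans ((hs t z').trans h2)))
  · obtain ⟨t, hzt, hvt⟩ := claimB z z' hzv hzz'
    have hz'z : ¬ ReflTransGen R z' z := fun h => hzz' (rsym h)
    obtain ⟨t', hz't', hvt'⟩ := claimB z' z hz'v hz'z
    have hz't : ¬ ReflTransGen R z' t := fun h => hzz' (rsym (h.trans (rsym hzt)))
    have hzt' : ¬ ReflTransGen R z t' := fun h => hzz' (h.trans (rsym hz't'))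
    have h1 : c z' t = b := claimD b z' t hvz'b hbj hvt hz'v (endNe hzt hzv) hz't
    have h2 : c z t' = a := claimD a z t' hvza haj hvt' hzv (endNe hz't' hz'v) hzt'
    have h3 : c z' z = c z' t := claimA hzt hz'z hz'v
    have h4 : c z z' = c z t' := claimA hz't' hzz' hzv
    exact hab ((h4.trans h2).symm.trans ((hs z z').trans (h3.trans h1)))

/-- Gallai-type lemma: three distinct used colors cannot all have connected
monochromatic subgraphs on a finite complete edge-colored graph. -/
private lemma gallai_aux {V : Type*} [Fintype V] (a b j : ℕ)
    (hab : a ≠ b) (haj : a ≠ j) (hbj : b ≠ j)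
    (c : V → V → ℕ) (hs : ∀ u v : V, c u v = c v u)
    (hua : ∃ u w : V, u ≠ w ∧ c u w = a)
    (hub : ∃ u w : V, u ≠ w ∧ c u w = b)
    (huj : ∃ u w : V, u ≠ w ∧ c u w = j)
    (hnr : ¬ HasRainbowTriangle c) :
    ¬ ((∀ x y : V, ReflTransGen (monoEdge c a) x y) ∧
       (∀ x y : V, ReflTransGen (monoEdge c b) x y) ∧
       (∀ x y : V, ReflTransGen (monoEdge c j) x y)) := by
  rintro ⟨hca, hcb, hcj⟩
  classical
  -- three pairwise distinct vertices
  obtain ⟨p, q, hpq, hcpq⟩ := hua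
  obtain ⟨p', q', hpq', hcpq'⟩ := hub
  have hthree : ∃ x₁ x₂ x₃ : V, x₁ ≠ x₂ ∧ x₁ ≠ x₃ ∧ x₂ ≠ x₃ := by
    by_cases h1 : p' = p ∨ p' = q
    · by_cases h2 : q' = p ∨ q' = q
      · exfalso
        have heq : c p' q' = a := by
          rcases h1 with rfl | rfl <;> rcases h2 with rfl | rfl
          · exact absurd rfl hpq'
          · exact hcpq
          · exact (hs p' q').trans hcpq
          · exact absurd rfl hpq'
        exact hab (heq.symm.trans hcpq')
      · push_neg at h2
        exact ⟨p, q, q', hpq, Ne.symm h2.1, Ne.symm h2.2⟩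
    · push_neg at h1
      exact ⟨p, q, p', hpq, Ne.symm h1.1, Ne.symm h1.2⟩
  obtain ⟨v, u₁, u₂, hvu₁, hvu₂, hu₁₂⟩ := hthree
  have hu₁v : u₁ ≠ v := Ne.symm hvu₁
  have hu₂v : u₂ ≠ v := Ne.symm hvu₂
  -- each of the colors a, b, j is used away from v
  have usedSub : ∀ i ℓ : ℕ, ℓ ≠ i →
      (∀ x y : V, ReflTransGen (monoEdge c i) x y) →
      (∀ x y : V, ReflTransGen (monoEdge c ℓ) x y) →
      ∃ p q : V, p ≠ v ∧ q ≠ v ∧ p ≠ q ∧ c p q = i := by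
    intro i ℓ hℓi hci hcℓ
    by_contra hno
    push_neg at hno
    have step1 : ∀ u : V, u ≠ v → c u v = i := by
      intro u hu
      have hw : ∃ w : V, w ≠ v ∧ u ≠ w := by
        by_cases h : u = u₁
        · exact ⟨u₂, hu₂v, h ▸ hu₁₂⟩
        · exact ⟨u₁, hu₁v, h⟩
      obtain ⟨w, hwv, huw⟩ := hw
      obtain ⟨s, hus, hcus⟩ := first_edge (hci u w) huw
      by_cases hsv : s = v
      · exact hsv ▸ hcus
      · exact absurd hcus (hno u s hu hsv hus)
    obtain ⟨s, hvs, hcvs⟩ := first_edge (hcℓ v u₁) hvu₁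
    have : c v s = i := (hs v s).trans (step1 s (Ne.symm hvs))
    exact hℓi (hcvs.symm.trans this)
  obtain ⟨pa, qa, hpav, hqav, hpaqa, hcpa⟩ := usedSub a b (Ne.symm hab) hca hcb
  obtain ⟨pb, qb, hpbv, hqbv, hpbqb, hcpb⟩ := usedSub b a hab hcb hca
  obtain ⟨pj, qj, hpjv, hqjv, hpjqj, hcpj⟩ := usedSub j a haj hcj hca
  -- the coloring restricted to the complement of v
  let Sub := {u : V // u ≠ v}
  let c' : Sub → Sub → ℕ := fun p q => c p.1 q.1
  have hs' : ∀ u w : Sub, c' u w = c' w u := fun u w => hs u.1 w.1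
  have hnr' : ¬ HasRainbowTriangle c' := by
    rintro ⟨u, w, t, h1, h2, h3, h4, h5, h6⟩
    exact hnr ⟨u.1, w.1, t.1, Subtype.coe_injective.ne h1, Subtype.coe_injective.ne h2,
      Subtype.coe_injective.ne h3, h4, h5, h6⟩
  have hsub := gallai_aux a b j hab haj hbj c' hs'
    ⟨⟨pa, hpav⟩, ⟨qa, hqav⟩, fun h => hpaqa (congrArg Subtype.val h), hcpa⟩
    ⟨⟨pb, hpbv⟩, ⟨qb, hqbv⟩, fun h => hpbqb (congrArg Subtype.val h), hcpb⟩
    ⟨⟨pj, hpjv⟩, ⟨qj, hqjv⟩, fun h => hpjqj (congrArg Subtype.val h), hcpj⟩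
    hnr'
  -- lifting restricted reachability into the subtype
  have lift : ∀ (i : ℕ) (x₀ : V) (hx₀ : x₀ ≠ v) (w : V),
      ReflTransGen (avoidRel c i v) x₀ w →
      ∀ (hw : w ≠ v), ReflTransGen (monoEdge c' i) ⟨x₀, hx₀⟩ ⟨w, hw⟩ := by
    intro i x₀ hx₀ w h
    induction h with
    | refl => intro hw; exact ReflTransGen.refl
    | @tail w₁ w₂ h1 h2 ih =>
      intro hw
      exact (ih h2.1).tail ⟨fun he => h2.2.2.1 (congrArg Subtype.val he), h2.2.2.2⟩
  rw [not_and_or, not_and_or] at hsub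
  rcases hsub with hd | hd | hd <;> push_neg at hd <;> obtain ⟨xx, yy, hne⟩ := hd
  · exact core hbj (Ne.symm hab) (Ne.symm haj) hs hnr hcb hcj hca v xx.1 yy.1 xx.2 yy.2
      (fun h => hne (lift a xx.1 xx.2 yy.1 h yy.2))
  · exact core haj hab (Ne.symm hbj) hs hnr hca hcj hcb v xx.1 yy.1 xx.2 yy.2
      (fun h => hne (lift b xx.1 xx.2 yy.1 h yy.2))
  · exact core hab haj hbj hs hnr hca hcb hcj v xx.1 yy.1 xx.2 yy.2
      (fun h => hne (lift j xx.1 xx.2 yy.1 h yy.2))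
termination_by Fintype.card V
decreasing_by
  classical
  exact Fintype.card_subtype_lt (x := v) (by simp)

/-- Every complete `k`-edge-colored graph with `k ≥ 3` and no rainbow
triangle has a color `i ∈ {1,…,k}` whose monochromatic subgraph `G_{|i}` is
disconnected, i.e. some pair of vertices is not joined by a walk. -/
theorem stmt6 {V : Type*} [Fintype V] [Nonempty V] (k : ℕ) (hk : 3 ≤ k)
    (c : V → V → ℕ) (hs : ∀ u v : V, c u v = c v u)
    (hrange : ∀ u v : V, u ≠ v → c u v ∈ Finset.Icc 1 k)
    (hsurj : ∀ i ∈ Finset.Icc 1 k, ∃ u v : V, u ≠ v ∧ c u v = i)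
    (hnr : ¬ HasRainbowTriangle c) :
    ∃ i ∈ Finset.Icc 1 k, ∃ x y : V, ¬ (monoGraph c hs i).Reachable x y := by
  by_contra hcon
  push_neg at hcon
  have hmem : ∀ i : ℕ, 1 ≤ i → i ≤ k → i ∈ Finset.Icc 1 k := by
    intro i h1 h2; exact Finset.mem_Icc.mpr ⟨h1, h2⟩
  have hconn : ∀ i : ℕ, i ∈ Finset.Icc 1 k → ∀ x y : V, ReflTransGen (monoEdge c i) x y := by
    intro i hi x y
    have := hcon i hi x y
    rw [SimpleGraph.reachable_iff_reflTransGen] at this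
    exact this
  have h1 : (1 : ℕ) ∈ Finset.Icc 1 k := hmem 1 le_rfl (by omega)
  have h2 : (2 : ℕ) ∈ Finset.Icc 1 k := hmem 2 (by omega) (by omega)
  have h3 : (3 : ℕ) ∈ Finset.Icc 1 k := hmem 3 (by omega) (by omega)
  exact gallai_aux 1 2 3 (by omega) (by omega) (by omega) c hs
    (hsurj 1 h1) (hsurj 2 h2) (hsurj 3 h3) hnr
    ⟨hconn 1 h1, hconn 2 h2, hconn 3 h3⟩
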